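/- Uniqueness and positivity of the first-order candidate for Version 1 (Lemma on ĥ₁): assume ā(x)(1 − τρ̄′(x)x) < 1 for all x ∈ ℝ and that h₁ is one-to-one. Then the function ĥ₁(x) := h₁(x) − F⁻¹(X₀ − Nx(1 − ā(x))) is strictly increasing on ℝ; consequently ĥ₁ has at most one zero, and if a zero exists it is strictly positive. -/

import Mathlib

open Real Filter

/-- `Fi f x = F(x) = ∫₀ˣ f(y) dy`. -/
noncomputable def Fi (f : ℝ → ℝ) (x : ℝ) : ℝ := ∫ y in (0:ℝ)..x, f y

/-- `ab τ ρ x = ā(x) = exp(−τ ρ̄(x))`. -/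
noncomputable def ab (τ : ℝ) (ρ : ℝ → ℝ) (x : ℝ) : ℝ := Real.exp (-(τ * ρ x))

/-- The function `h₁` of the generalized AFS model, Version 1. -/
noncomputable def h1 (Finv : ℝ → ℝ) (τ : ℝ) (ρ : ℝ → ℝ) (x : ℝ) : ℝ :=
  (Finv x - ab τ ρ x * (1 - τ * deriv ρ x * x) * Finv (ab τ ρ x * x)) /
    (1 - ab τ ρ x * (1 - τ * deriv ρ x * x))

/-- `ĥ₁(x) = h₁(x) − F⁻¹(X₀ − Nx(1 − ā(x)))`. -/
noncomputable def h1hat (Finv : ℝ → ℝ) (τ : ℝ) (ρ : ℝ → ℝ) (N : ℕ) (X₀ : ℝ) (x : ℝ) : ℝ :=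
  h1 Finv τ ρ x - Finv (X₀ - (N : ℝ) * (x * (1 - ab τ ρ x)))

/-- `ĥ₁` is strictly increasing; hence it has at most one zero, and any zero is positive. -/
theorem h1hat_strictMono_unique_positive_zero
    (f Finv : ℝ → ℝ) (hf : Continuous f) (hfpos : ∀ x, 0 < f x)
    (htop : Tendsto (Fi f) atTop atTop) (hbot : Tendsto (Fi f) atBot atBot)
    (hFinv₁ : ∀ x, Fi f (Finv x) = x) (hFinv₂ : ∀ x, Finv (Fi f x) = x)
    (τ : ℝ) (hτ : 0 < τ) (ρ : ℝ → ℝ) (hρ : ContDiff ℝ 1 ρ)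
    (hρ' : ∀ x, 0 < 1 - τ * deriv ρ x * x)
    (hlt : ∀ x, ab τ ρ x * (1 - τ * deriv ρ x * x) < 1)
    (N : ℕ) (hN : 1 ≤ N) (X₀ : ℝ) (hX₀ : 0 < X₀)
    (hh1 : Function.Injective (h1 Finv τ ρ)) :
    StrictMono (h1hat Finv τ ρ N X₀) ∧
    (∀ a b : ℝ, h1hat Finv τ ρ N X₀ a = 0 → h1hat Finv τ ρ N X₀ b = 0 → a = b) ∧
    (∀ a : ℝ, h1hat Finv τ ρ N X₀ a = 0 → 0 < a) := by
  -- F is strictly monotone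
  have hFmono : StrictMono (Fi f) := by
    intro a b hab
    have h1 : Fi f a + ∫ y in a..b, f y = Fi f b := by
      simpa [Fi] using intervalIntegral.integral_add_adjacent_intervals
        (hf.intervalIntegrable 0 a) (hf.intervalIntegrable a b)
    have h2 : 0 < ∫ y in a..b, f y :=
      intervalIntegral.intervalIntegral_pos_of_pos (hf.intervalIntegrable a b) hfpos hab
    linarith
  -- Finv is strictly monotone
  have hFinvMono : StrictMono Finv := by
    intro a b hab
    by_contra h
    push_neg at h
    have := hFmono.monotone h
    rw [hFinv₁, hFinv₁] at this
    exact absurd this (not_le.2 hab)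
  -- Finv is continuous
  have hFinvSurj : Function.Surjective Finv := fun x => ⟨Fi f x, hFinv₂ x⟩
  have hFinvCont : Continuous Finv := hFinvMono.monotone.continuous_of_surjective hFinvSurj
  -- basic continuity facts
  have hρd : Differentiable ℝ ρ := hρ.differentiable one_ne_zero
  have hρ'cont : Continuous (deriv ρ) := hρ.continuous_deriv le_rfl
  have habcont : Continuous (ab τ ρ) := by
    unfold ab; exact Real.continuous_exp.comp (continuous_const.mul (hρ.continuous)).neg
  set c : ℝ → ℝ := fun x => ab τ ρ x * (1 - τ * deriv ρ x * x) with hc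
  have hccont : Continuous c :=
    habcont.mul (continuous_const.sub ((continuous_const.mul hρ'cont).mul continuous_id))
  have hcpos : ∀ x, 0 < c x := fun x => mul_pos (Real.exp_pos _) (hρ' x)
  have hclt : ∀ x, c x < 1 := fun x => hlt x
  have hcne : ∀ x, 1 - c x ≠ 0 := fun x => ne_of_gt (by linarith [hclt x])
  have hh1cont : Continuous (h1 Finv τ ρ) := by
    have : Continuous (fun x => Finv (ab τ ρ x * x)) :=
      hFinvCont.comp (habcont.mul continuous_id)
    exact ((hFinvCont.sub (hccont.mul this)).div
      (continuous_const.sub hccont) hcne)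
  -- s x = x * (1 - ab x) is strictly increasing
  have hsderiv : ∀ x, HasDerivAt (fun x => x * (1 - ab τ ρ x)) (1 - c x) x := by
    intro x
    have h1 : HasDerivAt (fun x => -(τ * ρ x)) (-(τ * deriv ρ x)) x := by
      exact (((hρd x).hasDerivAt.const_mul τ).neg)
    have h2 : HasDerivAt (ab τ ρ) (ab τ ρ x * (-(τ * deriv ρ x))) x := by
      show HasDerivAt (fun x => Real.exp (-(τ * ρ x))) _ x
      simpa [ab, mul_comm] using h1.exp
    have h3 : HasDerivAt (fun x => x * (1 - ab τ ρ x))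
        (1 * (1 - ab τ ρ x) + x * (0 - ab τ ρ x * (-(τ * deriv ρ x)))) x :=
      (hasDerivAt_id x).mul ((hasDerivAt_const x 1).sub h2)
    convert h3 using 1
    simp [hc]; ring
  have hsmono : StrictMono (fun x => x * (1 - ab τ ρ x)) := by
    apply strictMono_of_deriv_pos
    intro x
    rw [(hsderiv x).deriv]
    linarith [hclt x]
  -- values of h1: h1 0 = Finv 0, h1 x > Finv x for x > 0
  have hh1_eq : ∀ x, h1 Finv τ ρ x - Finv x
      = c x * (Finv x - Finv (ab τ ρ x * x)) / (1 - c x) := by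
    intro x
    have hne := hcne x
    unfold h1
    rw [show ab τ ρ x * (1 - τ * deriv ρ x * x) = c x from rfl]
    field_simp
    ring
  have hh1zero : h1 Finv τ ρ 0 = Finv 0 := by
    have := hh1_eq 0
    simp only [mul_zero, sub_self, zero_div] at this
    linarith
  have hh1gt : ∀ x, 0 < x → Finv x < h1 Finv τ ρ x := by
    intro x hx
    have hs : 0 * (1 - ab τ ρ 0) < x * (1 - ab τ ρ x) := hsmono hx
    rw [zero_mul] at hs
    have : ab τ ρ x * x < x := by nlinarith
    have hF : Finv (ab τ ρ x * x) < Finv x := hFinvMono this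
    have h := hh1_eq x
    have : 0 < c x * (Finv x - Finv (ab τ ρ x * x)) / (1 - c x) :=
      div_pos (mul_pos (hcpos x) (by linarith)) (by linarith [hclt x])
    linarith
  -- h1 is strictly monotone
  have hh1mono : StrictMono (h1 Finv τ ρ) := by
    rcases hh1cont.strictMono_of_inj hh1 with h | h
    · exact h
    · exfalso
      have h01 : h1 Finv τ ρ 1 < h1 Finv τ ρ 0 := h one_pos
      have : Finv 0 < Finv 1 := hFinvMono one_pos
      have := hh1gt 1 one_pos
      rw [hh1zero] at h01
      linarith
  -- second summand: x ↦ -Finv (X₀ - N * s x) is strictly monotone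
  have hNpos : (0:ℝ) < (N:ℝ) := by exact_mod_cast Nat.lt_of_lt_of_le Nat.zero_lt_one hN
  have hmono : StrictMono (h1hat Finv τ ρ N X₀) := by
    intro a b hab
    have hs : a * (1 - ab τ ρ a) < b * (1 - ab τ ρ b) := hsmono hab
    have hNs := mul_lt_mul_of_pos_left hs hNpos
    have : X₀ - (N : ℝ) * (b * (1 - ab τ ρ b)) < X₀ - (N : ℝ) * (a * (1 - ab τ ρ a)) := by
      linarith
    have hF := hFinvMono this
    have := hh1mono hab
    simp only [h1hat]
    linarith
  refine ⟨hmono, fun a b ha hb => hmono.injective (ha.trans hb.symm), fun a ha => ?_⟩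
  by_contra h
  push_neg at h
  have h0 : h1hat Finv τ ρ N X₀ 0 < 0 := by
    simp only [h1hat, zero_mul, mul_zero, sub_zero, hh1zero]
    have : Finv 0 < Finv X₀ := hFinvMono hX₀
    linarith
  rcases eq_or_lt_of_le h with h | h
  · rw [h] at ha; linarith
  · have := hmono h; linarith
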